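/- Let f : F_q → F_q be differentially d-uniform. Then N(f) ≤ q + d·t₀(f), where t₀(f) is the number of nonzero a ∈ F_q for which f(x+a) − f(x) = 0 has a solution. Equality holds if and only if each of these t₀(f) equations has exactly d solutions. -/
import Mathlib


open Finset
open scoped Classical

/-- Number of preimages of `y` under `f`. -/
noncomputable def preCard {F : Type*} [Fintype F] (f : F → F) (y : F) : ℕ :=
  (Finset.univ.filter fun x => f x = y).card

/-- `N(f)`: the number of pairs `(x,y)` with `f x = f y`. -/
noncomputable def NN {F : Type*} [Fintype F] (f : F → F) : ℕ :=
  (Finset.univ.filter fun p : F × F => f p.1 = f p.2).card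

/-- `f` is differentially `d`-uniform: every equation `f (x+a) - f x = b` with `a ≠ 0`
has at most `d` solutions. -/
def DUniform {F : Type*} [Field F] [Fintype F] (f : F → F) (d : ℕ) : Prop :=
  ∀ a b : F, a ≠ 0 → (Finset.univ.filter fun x => f (x + a) - f x = b).card ≤ d

/-- `M_r(f)`: the number of elements with exactly `r` preimages under `f`. -/
noncomputable def Mcount {F : Type*} [Fintype F] (f : F → F) (r : ℕ) : ℕ :=
  (Finset.univ.filter fun y => preCard f y = r).card

/-- `N(f) ≤ q + d·t₀(f)`, with equality iff each of the `t₀(f)` equations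
`f(x+a) - f(x) = 0` (with `a ≠ 0` admitting a solution) has exactly `d` solutions. -/
theorem N_le_card_add_d_mul_t0 {F : Type*} [Field F] [Fintype F] {f : F → F} {d : ℕ}
    (hf : DUniform f d) :
    NN f ≤ Fintype.card F +
      d * (Finset.univ.filter fun a : F => a ≠ 0 ∧ ∃ x, f (x + a) - f x = 0).card ∧
    (NN f = Fintype.card F +
        d * (Finset.univ.filter fun a : F => a ≠ 0 ∧ ∃ x, f (x + a) - f x = 0).card ↔
      ∀ a : F, a ≠ 0 → (∃ x, f (x + a) - f x = 0) →
        (Finset.univ.filter fun x => f (x + a) - f x = 0).card = d) := by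
  classical
  set c : F → ℕ := fun a => (Finset.univ.filter fun x => f (x + a) - f x = 0).card with hc
  set T : Finset F := Finset.univ.filter fun a : F => a ≠ 0 ∧ ∃ x, f (x + a) - f x = 0 with hT
  -- NN f = ∑ a, c a
  have hsum : NN f = ∑ a : F, c a := by
    rw [NN]
    rw [Finset.card_eq_sum_card_fiberwise (f := fun p : F × F => p.2 - p.1)
      (t := Finset.univ) (fun p _ => Finset.mem_univ _)]
    refine Finset.sum_congr rfl fun a _ => ?_
    refine Finset.card_bij' (fun p _ => p.1) (fun x _ => (x, x + a)) ?_ ?_ ?_ ?_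
    · intro p hp
      simp only [Finset.mem_filter, Finset.mem_univ, true_and] at hp ⊢
      have h2 : p.2 = p.1 + a := by
        have := hp.2; linear_combination this
      rw [← h2, hp.1, sub_self]
    · intro x hx
      simp only [Finset.mem_filter, Finset.mem_univ, true_and] at hx ⊢
      constructor
      · have := sub_eq_zero.mp hx; exact this.symm
      · ring
    · intro p hp
      simp only [Finset.mem_filter, Finset.mem_univ, true_and] at hp
      have h2 : p.2 = p.1 + a := by linear_combination hp.2
      exact Prod.ext rfl h2.symm
    · intro x hx; rfl
  have hc0 : c 0 = Fintype.card F := by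
    simp [hc]
  have hsplit : NN f = Fintype.card F + ∑ a ∈ T, c a := by
    rw [hsum, ← Finset.sum_filter_add_sum_filter_not Finset.univ (fun a : F => a = 0)]
    congr 1
    · have : Finset.univ.filter (fun a : F => a = 0) = {0} := by
        ext a; simp
      rw [this, Finset.sum_singleton, hc0]
    · refine (Finset.sum_subset ?_ ?_).symm
      · intro a ha
        simp only [hT, Finset.mem_filter, Finset.mem_univ, true_and] at ha ⊢
        exact ha.1
      · intro a ha hna
        simp only [hT, Finset.mem_filter, Finset.mem_univ, true_and, not_and,
          not_exists] at ha hna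
        have : (Finset.univ.filter fun x => f (x + a) - f x = 0) = ∅ := by
          ext x
          simp only [Finset.mem_filter, Finset.mem_univ, true_and, Finset.notMem_empty,
            iff_false]
          exact hna ha x
        simp [hc, this]
  have hle : ∀ a ∈ T, c a ≤ d := by
    intro a ha
    simp only [hT, Finset.mem_filter, Finset.mem_univ, true_and] at ha
    exact hf a 0 ha.1
  have hbound : ∑ a ∈ T, c a ≤ d * T.card := by
    calc ∑ a ∈ T, c a ≤ ∑ _a ∈ T, d := Finset.sum_le_sum hle
    _ = d * T.card := by rw [Finset.sum_const, smul_eq_mul, mul_comm]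
  refine ⟨by omega, ?_⟩
  constructor
  · intro heq a ha hex
    have haT : a ∈ T := by simp [hT, ha, hex]
    by_contra hne
    have hlt : c a < d := lt_of_le_of_ne (hle a haT) hne
    have : ∑ a ∈ T, c a < ∑ _a ∈ T, d :=
      Finset.sum_lt_sum hle ⟨a, haT, hlt⟩
    rw [Finset.sum_const, smul_eq_mul, mul_comm] at this
    omega
  · intro hall
    have : ∑ a ∈ T, c a = d * T.card := by
      rw [Finset.sum_congr rfl (fun a ha => by
        simp only [hT, Finset.mem_filter, Finset.mem_univ, true_and] at ha
        exact hall a ha.1 ha.2)]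
      rw [Finset.sum_const, smul_eq_mul, mul_comm]
    omega
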